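/- Let p be an odd prime and r ≥ 1. Suppose a_0,...,a_{r-1} ∈ ℕ and e_0,...,e_{r-1} ∈ {0,1}, not all zero, satisfy (p^r - 1) divides Σ_k p^k (a_k + e_k). Then Σ_k (e_k + 2 a_k) ≥ r(2p - 3). Moreover, if equality holds then e_k = 1 and a_k = p - 2 for all k. -/

import Mathlib

lemma geom_aux (p : ℕ) (hp : 1 ≤ p) : ∀ r, (∑ i ∈ Finset.range r, p ^ i) * (p - 1) + 1 = p ^ r := by
  intro r
  induction r with
  | zero => simp
  | succ n ih =>
    rw [Finset.sum_range_succ, pow_succ]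
    zify [hp] at ih ⊢
    linear_combination ih

lemma rot_aux (p r : ℕ) (hr : 0 < r) (k : ℕ) :
    ∑ j ∈ Finset.range r, p ^ ((k + j) % r) = ∑ i ∈ Finset.range r, p ^ i := by
  haveI : NeZero r := ⟨hr.ne'⟩
  rw [← Fin.sum_univ_eq_sum_range (fun j => p ^ ((k + j) % r)),
      ← Fin.sum_univ_eq_sum_range (fun i => p ^ i)]
  exact Fintype.sum_equiv (Equiv.addLeft (⟨k % r, Nat.mod_lt _ hr⟩ : Fin r)) _ _
    (fun x => by simp [Fin.add_def, Nat.mod_add_mod])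

lemma rec_aux (p r : ℕ) (hr : 0 < r) (hp : 1 ≤ p) (b : Fin r → ℕ) (j : ℕ) (k0 : Fin r)
    (hk0 : ((k0 : ℕ) + j) % r = r - 1) :
    p * (∑ k : Fin r, b k * p ^ (((k : ℕ) + j) % r)) =
      (∑ k : Fin r, b k * p ^ (((k : ℕ) + (j + 1)) % r)) + b k0 * (p ^ r - 1) := by
  have hpr : 1 ≤ p ^ r := Nat.one_le_pow _ _ hp
  have hite : b k0 * (p ^ r - 1) = ∑ k : Fin r, if k = k0 then b k * (p ^ r - 1) else 0 := by
    rw [Finset.sum_ite_eq' Finset.univ k0 (fun k => b k * (p ^ r - 1))]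
    simp
  rw [Finset.mul_sum, hite, ← Finset.sum_add_distrib]
  apply Finset.sum_congr rfl
  intro k _
  by_cases hk : k = k0
  · subst hk
    simp only [if_pos rfl]
    have h1 : ((k : ℕ) + j + 1) % r = 0 := by
      rw [← Nat.mod_add_mod, hk0, show r - 1 + 1 = r from by omega, Nat.mod_self]
    have h2 : ((k : ℕ) + (j + 1)) % r = 0 := by rw [← Nat.add_assoc]; exact h1
    rw [hk0, h2, pow_zero, mul_one]
    have hfin : p * p ^ (r - 1) = p ^ r := by
      rw [← pow_succ']
      congr 1
      omega
    calc p * (b k * p ^ (r - 1)) = b k * (p * p ^ (r - 1)) := by ring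
      _ = b k * p ^ r := by rw [hfin]
      _ = b k + b k * (p ^ r - 1) := by zify [hpr]; ring
  · simp only [if_neg hk, add_zero]
    have hne : ((k : ℕ) + j) % r ≠ r - 1 := by
      intro h
      apply hk
      have hmeq : (k : ℕ) + j ≡ (k0 : ℕ) + j [MOD r] := by
        unfold Nat.ModEq; rw [h, hk0]
      have := Nat.ModEq.add_right_cancel' j hmeq
      have hk' : (k : ℕ) % r = (k0 : ℕ) % r := this
      rw [Nat.mod_eq_of_lt k.isLt, Nat.mod_eq_of_lt k0.isLt] at hk'
      exact Fin.ext hk'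
    have hm : ((k : ℕ) + j) % r < r := Nat.mod_lt _ hr
    have hm1 : ((k : ℕ) + j) % r + 1 < r := by omega
    have h2 : ((k : ℕ) + (j + 1)) % r = ((k : ℕ) + j) % r + 1 := by
      rw [← Nat.add_assoc, ← Nat.mod_add_mod, Nat.mod_eq_of_lt hm1]
    rw [h2, pow_succ]; ring

/-- If `p` is an odd prime, `a_k ∈ ℕ` and `e_k ∈ {0,1}`, not all zero, with
`p^r - 1` dividing `∑ p^k (a_k + e_k)`, then `∑ (e_k + 2 a_k) ≥ r (2p - 3)`,
with equality forcing `e_k = 1` and `a_k = p - 2` for all `k`. -/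
theorem stmt_14 (p r : ℕ) (hp : p.Prime) (hodd : Odd p) (hr : 1 ≤ r)
    (a e : Fin r → ℕ) (he : ∀ k, e k ≤ 1)
    (hne : ∃ k, a k ≠ 0 ∨ e k ≠ 0)
    (hdvd : (p ^ r - 1) ∣ ∑ k : Fin r, p ^ (k : ℕ) * (a k + e k)) :
    r * (2 * p - 3) ≤ ∑ k, (e k + 2 * a k) ∧
      (∑ k, (e k + 2 * a k) = r * (2 * p - 3) → ∀ k, e k = 1 ∧ a k = p - 2) := by
  have hr0 : 0 < r := hr
  have hp3 : 3 ≤ p := by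
    have h2 := hp.two_le
    rcases hodd with ⟨m, hm⟩
    omega
  have hppos : 1 ≤ p := by omega
  have hprp : p ≤ p ^ r := Nat.le_self_pow (by omega) p
  have hN2 : 2 ≤ p ^ r - 1 := by omega
  have hNpos : 0 < p ^ r - 1 := by omega
  haveI : NeZero (p ^ r - 1) := ⟨by omega⟩
  set b : Fin r → ℕ := fun k => a k + e k with hb
  set M : ℕ → ℕ := fun j => ∑ k : Fin r, b k * p ^ (((k : ℕ) + j) % r) with hM
  -- divisibility
  have h0 : ((p : ZMod (p ^ r - 1))) ^ r = 1 := by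
    have hcast : ((p ^ r : ℕ) : ZMod (p ^ r - 1)) = ((p ^ r - 1 : ℕ) : ZMod (p ^ r - 1)) + 1 := by
      rw [show p ^ r = (p ^ r - 1) + 1 from by omega]; push_cast; ring
    rw [ZMod.natCast_self, zero_add] at hcast
    push_cast at hcast
    exact hcast
  have hpow : ∀ n : ℕ, ((p : ZMod (p ^ r - 1))) ^ (n % r) = (p : ZMod (p ^ r - 1)) ^ n := by
    intro n
    conv_rhs => rw [show n = r * (n / r) + n % r from (Nat.div_add_mod n r).symm]
    rw [pow_add, pow_mul, h0, one_pow, one_mul]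
  have hMdvd : ∀ j, (p ^ r - 1) ∣ M j := by
    intro j
    apply (ZMod.natCast_eq_zero_iff _ _).mp
    have hc : ((M j : ℕ) : ZMod (p ^ r - 1)) =
        (p : ZMod (p ^ r - 1)) ^ j *
          ((∑ k : Fin r, p ^ (k : ℕ) * (a k + e k) : ℕ) : ZMod (p ^ r - 1)) := by
      simp only [hM, hb]
      push_cast
      rw [Finset.mul_sum]
      apply Finset.sum_congr rfl
      intro k _
      rw [hpow ((k : ℕ) + j), pow_add]
      ring
    rw [hc, (ZMod.natCast_eq_zero_iff _ _).mpr hdvd, mul_zero]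
  -- positivity
  have hMpos : ∀ j, 0 < M j := by
    intro j
    obtain ⟨k, hk⟩ := hne
    have hbk : 0 < b k := by simp only [hb]; omega
    calc 0 < b k * p ^ (((k : ℕ) + j) % r) :=
          Nat.mul_pos hbk (pow_pos (by omega) _)
      _ ≤ M j := by
          simp only [hM]
          exact Finset.single_le_sum (f := fun i : Fin r => b i * p ^ (((i : ℕ) + j) % r))
            (fun i _ => Nat.zero_le _) (Finset.mem_univ k)
  have hMge : ∀ j, p ^ r - 1 ≤ M j := fun j => Nat.le_of_dvd (hMpos j) (hMdvd j)
  -- sum of M over range r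
  set S : ℕ := ∑ k : Fin r, b k with hS
  set G : ℕ := ∑ i ∈ Finset.range r, p ^ i with hG
  have hsum : ∑ j ∈ Finset.range r, M j = S * G := by
    simp only [hM]
    rw [Finset.sum_comm, hS, hG, Finset.sum_mul]
    apply Finset.sum_congr rfl
    intro k _
    rw [← Finset.mul_sum, rot_aux p r hr0 (k : ℕ)]
  have hGN : G * (p - 1) = p ^ r - 1 := Nat.eq_sub_of_add_eq (geom_aux p hppos r)
  have hlow : r * (p ^ r - 1) ≤ ∑ j ∈ Finset.range r, M j := by
    calc r * (p ^ r - 1) = ∑ _j ∈ Finset.range r, (p ^ r - 1) := by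
          rw [Finset.sum_const, Finset.card_range, smul_eq_mul]
      _ ≤ ∑ j ∈ Finset.range r, M j := Finset.sum_le_sum (fun j _ => hMge j)
  have hSX : r * (p - 1) ≤ S := by
    have h1 : r * (p ^ r - 1) ≤ S * G := hsum ▸ hlow
    have h2 : (r * (p - 1)) * (p ^ r - 1) ≤ S * (p ^ r - 1) := by
      calc (r * (p - 1)) * (p ^ r - 1) = r * (p ^ r - 1) * (p - 1) := by ring
        _ ≤ S * G * (p - 1) := Nat.mul_le_mul_right _ h1
        _ = S * (G * (p - 1)) := by ring
        _ = S * (p ^ r - 1) := by rw [hGN]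
    exact Nat.le_of_mul_le_mul_right h2 hNpos
  set T : ℕ := ∑ k, (e k + 2 * a k) with hT
  set E : ℕ := ∑ k, e k with hE
  have h2S : 2 * S = T + E := by
    rw [hS, hT, hE, ← Finset.sum_add_distrib, Finset.mul_sum]
    apply Finset.sum_congr rfl
    intro k _
    simp only [hb]
    ring
  have hEr : E ≤ r := by
    calc E ≤ ∑ _k : Fin r, 1 := Finset.sum_le_sum (fun k _ => he k)
      _ = r := by simp
  have hkey : 2 * (r * (p - 1)) = r * (2 * p - 3) + r := by
    calc 2 * (r * (p - 1)) = r * (2 * (p - 1)) := by ring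
      _ = r * ((2 * p - 3) + 1) := by rw [show 2 * (p - 1) = 2 * p - 3 + 1 from by omega]
      _ = r * (2 * p - 3) + r := by ring
  constructor
  · linarith [hSX, hEr, h2S, hkey]
  · intro heq
    have hEr' : E = r := by linarith [hSX, hEr, h2S, hkey]
    have hSX' : S = r * (p - 1) := by linarith [hSX, hEr, h2S, hkey]
    have he1 : ∀ k, e k = 1 := by
      intro k
      by_contra hk
      have hk0 : e k = 0 := by have := he k; omega
      have hlt : E < ∑ _k : Fin r, 1 :=
        Finset.sum_lt_sum (fun i _ => he i) ⟨k, Finset.mem_univ k, by omega⟩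
      simp at hlt
      omega
    -- every M j equals p^r - 1 for j in range r
    have hMsum : ∑ j ∈ Finset.range r, M j = r * (p ^ r - 1) := by
      rw [hsum, hSX']
      calc r * (p - 1) * G = r * (G * (p - 1)) := by ring
        _ = r * (p ^ r - 1) := by rw [hGN]
    have hMeq : ∀ j ∈ Finset.range r, M j = p ^ r - 1 := by
      intro j hj
      by_contra hne'
      have hlt : p ^ r - 1 < M j := lt_of_le_of_ne (hMge j) (Ne.symm hne')
      have : ∑ _j ∈ Finset.range r, (p ^ r - 1) < ∑ j ∈ Finset.range r, M j :=
        Finset.sum_lt_sum (fun i _ => hMge i) ⟨j, hj, hlt⟩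
      rw [Finset.sum_const, Finset.card_range, smul_eq_mul, hMsum] at this
      omega
    have hMall : ∀ j, M j = p ^ r - 1 := by
      intro j
      have hper : M j = M (j % r) := by
        simp only [hM]
        apply Finset.sum_congr rfl
        intro k _
        congr 1
        conv_lhs => rw [Nat.add_mod]
        conv_rhs => rw [Nat.add_mod, Nat.mod_mod_of_dvd _ dvd_rfl]
      rw [hper]
      exact hMeq _ (Finset.mem_range.mpr (Nat.mod_lt _ hr0))
    intro k0
    have hj : ((k0 : ℕ) + (r - 1 - (k0 : ℕ))) % r = r - 1 := by
      have hk0lt := k0.isLt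
      rw [show (k0 : ℕ) + (r - 1 - (k0 : ℕ)) = r - 1 from by omega]
      exact Nat.mod_eq_of_lt (by omega)
    have hrec := rec_aux p r hr0 hppos b (r - 1 - (k0 : ℕ)) k0 hj
    rw [show (∑ k : Fin r, b k * p ^ (((k : ℕ) + (r - 1 - (k0 : ℕ))) % r)) = M (r - 1 - (k0 : ℕ)) from rfl,
        show (∑ k : Fin r, b k * p ^ (((k : ℕ) + ((r - 1 - (k0 : ℕ)) + 1)) % r)) = M ((r - 1 - (k0 : ℕ)) + 1) from rfl,
        hMall, hMall] at hrec
    have hb1 : p * (p ^ r - 1) = (1 + b k0) * (p ^ r - 1) := by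
      rw [hrec]; ring
    have hbk0 : p = 1 + b k0 := Nat.eq_of_mul_eq_mul_right hNpos hb1
    have hek := he1 k0
    have hbdef : b k0 = a k0 + e k0 := rfl
    exact ⟨hek, by omega⟩
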